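/- arXiv:1109.4434 — 3 statements merged into one kernel-verified Lean document; each statement's English description precedes it below -/
import Mathlib

section
/- Let I = (I_1,...,I_n) be a Grassmann necklace with I_i = I_j for some i ≠ j, and let M be the associated positroid. Set k¹ = |I_i ∩ [i,j)| and k² = |I_i ∩ [j,i)|. Then for every J ∈ M, one has |J ∩ [i,j)| = k¹ and |J ∩ [j,i)| = k². -/
def cpos {n : ℕ} (i a : Fin n) : ℕ := ((a - i : Fin n) : ℕ)

def CyclicallyOrdered {n : ℕ} (a b c d : Fin n) : Prop :=
  0 < cpos a b ∧ cpos a b < cpos a c ∧ cpos a c < cpos a d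

instance {n : ℕ} (a b c d : Fin n) : Decidable (CyclicallyOrdered a b c d) := by
  unfold CyclicallyOrdered; infer_instance

def WeaklySeparated {n : ℕ} (I J : Finset (Fin n)) : Prop :=
  ¬ ∃ a b a' b' : Fin n, CyclicallyOrdered a b a' b' ∧
    a ∈ I \ J ∧ a' ∈ I \ J ∧ b ∈ J \ I ∧ b' ∈ J \ I

def cycIco {n : ℕ} (i j : Fin n) : Finset (Fin n) :=
  Finset.univ.filter (fun x => cpos i x < cpos i j)

def cycIcc {n : ℕ} (i j : Fin n) : Finset (Fin n) :=
  Finset.univ.filter (fun x => cpos i x ≤ cpos i j)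

def cycOpen {n : ℕ} (i j : Fin n) : Finset (Fin n) :=
  Finset.univ.filter (fun x => 0 < cpos i x ∧ cpos i x < cpos i j)

def IsGrassmannNecklace {n : ℕ} [NeZero n] (k : ℕ) (I : Fin n → Finset (Fin n)) : Prop :=
  (∀ i, (I i).card = k) ∧ (∀ i, I i \ {i} ⊆ I (i + 1)) ∧ (∀ i, i ∉ I i → I (i + 1) = I i)

def leShift {n : ℕ} (i : Fin n) (A B : Finset (Fin n)) : Prop :=
  List.Forall₂ (· ≤ ·) ((A.image (fun x => x - i)).sort (· ≤ ·))
    ((B.image (fun x => x - i)).sort (· ≤ ·))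

def MemPositroid {n : ℕ} (I : Fin n → Finset (Fin n)) (J : Finset (Fin n)) : Prop :=
  ∀ i, leShift i (I i) J

def IsWSCollection {n : ℕ} (C : Finset (Finset (Fin n))) : Prop :=
  ∀ X ∈ C, ∀ Y ∈ C, WeaklySeparated X Y

def IsMaxWSCollection {n : ℕ} (k : ℕ) (C : Finset (Finset (Fin n))) : Prop :=
  (∀ X ∈ C, X.card = k) ∧ IsWSCollection C ∧
  ∀ C' : Finset (Finset (Fin n)), C ⊆ C' → (∀ X ∈ C', X.card = k) → IsWSCollection C' → C' = C

private lemma countP_le_of_forall₂ {n c : ℕ} :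
    ∀ {l₁ l₂ : List (Fin n)}, List.Forall₂ (· ≤ ·) l₁ l₂ →
      l₂.countP (fun (y : Fin n) => decide ((y : ℕ) < c)) ≤ l₁.countP (fun (y : Fin n) => decide ((y : ℕ) < c)) := by
  intro l₁ l₂ h
  induction h with
  | nil => exact le_rfl
  | @cons a b l₁' l₂' hab _ ih =>
      simp only [List.countP_cons, decide_eq_true_eq]
      have hab' : (a : ℕ) ≤ (b : ℕ) := hab
      split_ifs with hb ha ha
      · exact Nat.add_le_add ih le_rfl
      · exact absurd (lt_of_le_of_lt hab' hb) ha
      · simpa using le_trans ih (Nat.le_succ _)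
      · simpa using ih

private lemma card_filter_eq_countP {n : ℕ} (i : Fin n) (S : Finset (Fin n)) (c : ℕ)
    [NeZero n] :
    (S.filter (fun x => cpos i x < c)).card
      = ((S.image (fun x => x - i)).sort (· ≤ ·)).countP (fun (y : Fin n) => decide ((y : ℕ) < c)) := by
  rw [List.Perm.countP_eq _ (Finset.sort_perm_toList _ _)]
  have h1 : ((S.image (fun x => x - i)).toList).countP (fun (y : Fin n) => decide ((y : ℕ) < c))
      = ((S.image (fun x => x - i)).filter (fun (y : Fin n) => (y : ℕ) < c)).card := by
    simp only [Finset.toList, Finset.filter, Finset.card]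
    rw [← Multiset.coe_countP, Multiset.coe_toList, Multiset.countP_eq_card_filter]
  rw [h1, Finset.filter_image,
    Finset.card_image_of_injective _ (sub_left_injective (b := i))]
  rfl

private lemma key_card_le {n : ℕ} [NeZero n] (i : Fin n) (A B : Finset (Fin n))
    (h : leShift i A B) (c : ℕ) :
    (B.filter (fun x => cpos i x < c)).card ≤ (A.filter (fun x => cpos i x < c)).card := by
  rw [card_filter_eq_countP, card_filter_eq_countP]
  exact countP_le_of_forall₂ h

private lemma cpos_add {n : ℕ} [NeZero n] (i j x : Fin n) :
    cpos i x = (cpos j x + cpos i j) % n := by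
  have : x - i = (x - j) + (j - i) := (sub_add_sub_cancel x j i).symm
  rw [cpos, this, Fin.add_def]
  rfl

private lemma cpos_sum {n : ℕ} [NeZero n] {i j : Fin n} (hij : i ≠ j) :
    cpos i j + cpos j i = n := by
  have h0 : (j - i) + (i - j) = 0 := by rw [sub_add_sub_cancel, sub_self]
  have hne : j - i ≠ 0 := by
    intro h; exact hij (by rw [sub_eq_zero] at h; exact h.symm)
  have hv : (cpos i j + cpos j i) % n = 0 := by
    have := congrArg Fin.val h0
    rwa [Fin.add_def] at this
  have hd : n ∣ cpos i j + cpos j i := Nat.dvd_of_mod_eq_zero hv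
  obtain ⟨t, ht⟩ := hd
  have h1 : 0 < cpos i j := by
    rcases Nat.eq_zero_or_pos (cpos i j) with h | h
    · exact absurd (by apply Fin.ext; simpa [cpos] using h) hne
    · exact h
  have h2 : cpos i j < n := Fin.is_lt _
  have h3 : cpos j i < n := Fin.is_lt _
  have hn : 0 < n := Nat.pos_of_ne_zero (NeZero.ne n)
  have ht2 : t < 2 := by
    by_contra h
    push_neg at h
    have : n * 2 ≤ n * t := Nat.mul_le_mul_left n h
    omega
  interval_cases t <;> omega

private lemma cpos_compl {n : ℕ} [NeZero n] {i j : Fin n} (hij : i ≠ j) (x : Fin n) :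
    cpos j x < cpos j i ↔ ¬ cpos i x < cpos i j := by
  have hs := cpos_sum hij
  have ha := cpos_add i j x
  have hd : cpos j x < n := Fin.is_lt _
  have hc : cpos i j < n := Fin.is_lt _
  by_cases h : cpos j x + cpos i j < n
  · rw [Nat.mod_eq_of_lt h] at ha
    omega
  · have : (cpos j x + cpos i j) % n = cpos j x + cpos i j - n := by
      rw [Nat.mod_eq_sub_mod (by omega), Nat.mod_eq_of_lt (by omega)]
    rw [this] at ha
    omega

/-- If I_i = I_j in a Grassmann necklace, then every member of the positroid
meets the cyclic intervals [i,j) and [j,i) in the same cardinalities as I_i. -/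
theorem stmt_7 {n k : ℕ} [NeZero n] (I : Fin n → Finset (Fin n))
    (hI : IsGrassmannNecklace k I) (i j : Fin n) (hij : i ≠ j) (heq : I i = I j)
    (J : Finset (Fin n)) (hJk : J.card = k) (hJ : MemPositroid I J) :
    (J ∩ cycIco i j).card = (I i ∩ cycIco i j).card ∧
    (J ∩ cycIco j i).card = (I i ∩ cycIco j i).card := by
  have hinter : ∀ (S : Finset (Fin n)) (a b : Fin n),
      S ∩ cycIco a b = S.filter (fun x => cpos a x < cpos a b) := by
    intro S a b
    ext x
    simp [cycIco, Finset.mem_inter, Finset.mem_filter]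
  have h1 : (J ∩ cycIco i j).card ≤ (I i ∩ cycIco i j).card := by
    rw [hinter, hinter]; exact key_card_le i (I i) J (hJ i) _
  have h2 : (J ∩ cycIco j i).card ≤ (I i ∩ cycIco j i).card := by
    rw [hinter, hinter, heq]; exact key_card_le j (I j) J (hJ j) _
  have hcompl : ∀ (S : Finset (Fin n)),
      (S ∩ cycIco i j).card + (S ∩ cycIco j i).card = S.card := by
    intro S
    rw [hinter, hinter]
    have : S.filter (fun x => cpos j x < cpos j i)
        = S.filter (fun x => ¬ cpos i x < cpos i j) := by
      apply Finset.filter_congr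
      intro x _
      simp [cpos_compl hij x]
    rw [this, Finset.card_filter_add_card_filter_not]
  have hsum1 := hcompl J
  have hsum2 := hcompl (I i)
  have hk : (I i).card = k := hI.1 i
  omega
end

section
/- Let I = (I_1,...,I_n) be a Grassmann necklace with I_i = I_j (i ≠ j), write I¹ = I_i ∩ [i,j), I² = I_i ∩ [j,i). If J ∈ M_I is weakly separated from I_i = I¹ ∪ I², then J ∩ [i,j) = I¹ or J ∩ [j,i) = I². -/
set_option linter.unusedSectionVars false


section General

variable {α : Type*} [LinearOrder α]

/-- Termwise domination of sorted lists of two finsets. -/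
def LEsort (A B : Finset α) : Prop :=
  List.Forall₂ (· ≤ ·) (A.sort (· ≤ ·)) (B.sort (· ≤ ·))

lemma LEsort.card_eq {A B : Finset α} (h : LEsort A B) : A.card = B.card := by
  have := h.length_eq
  simpa using this

lemma countP_lt_le {l₁ l₂ : List α} (h : List.Forall₂ (· ≤ ·) l₁ l₂) (t : α) :
    l₂.countP (fun x => decide (x < t)) ≤ l₁.countP (fun x => decide (x < t)) := by
  induction h with
  | nil => simp
  | @cons a b l₁ l₂ hab _ ih =>
    simp only [List.countP_cons]
    by_cases hb : b < t
    · have ha : a < t := lt_of_le_of_lt hab hb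
      rw [decide_eq_true ha, decide_eq_true hb]
      simp only [if_true]
      omega
    · have : decide (b < t) = false := by simp [hb]
      rw [this]
      simp only [Bool.false_eq_true, if_false]
      split <;> omega

lemma countP_ge_le {l₁ l₂ : List α} (h : List.Forall₂ (· ≤ ·) l₁ l₂) (t : α) :
    l₁.countP (fun x => decide (t ≤ x)) ≤ l₂.countP (fun x => decide (t ≤ x)) := by
  induction h with
  | nil => simp
  | @cons a b l₁ l₂ hab _ ih =>
    simp only [List.countP_cons]
    by_cases ha : t ≤ a
    · have hb : t ≤ b := le_trans ha hab
      rw [decide_eq_true ha, decide_eq_true hb]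
      simp only [if_true]
      omega
    · have : decide (t ≤ a) = false := by simp [ha]
      rw [this]
      simp only [Bool.false_eq_true, if_false]
      split <;> omega

lemma card_filter_eq_countP_s8 (A : Finset α) (p : α → Prop) [DecidablePred p] :
    (A.filter p).card = (A.sort (· ≤ ·)).countP (fun x => decide (p x)) := by
  have h1 : (A.filter p).card = Multiset.countP p A.val := by
    rw [Finset.card_def, Finset.filter_val, ← Multiset.countP_eq_card_filter]
  rw [h1, ← Finset.sort_eq A (· ≤ ·), Multiset.coe_countP]

lemma LEsort.card_filter_lt_le {A B : Finset α} (h : LEsort A B) (t : α) :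
    (B.filter (· < t)).card ≤ (A.filter (· < t)).card := by
  rw [card_filter_eq_countP_s8, card_filter_eq_countP_s8]
  exact countP_lt_le h t

lemma LEsort.card_filter_ge_le {A B : Finset α} (h : LEsort A B) (t : α) :
    (A.filter (t ≤ ·)).card ≤ (B.filter (t ≤ ·)).card := by
  rw [card_filter_eq_countP_s8, card_filter_eq_countP_s8]
  exact countP_ge_le h t

lemma exists_lt_of_LEsort_ne [DecidableEq α] {A B : Finset α} (h : LEsort A B) (hne : A ≠ B) :
    ∃ x ∈ B \ A, ∃ y ∈ A \ B, y < x := by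
  have hcard := h.card_eq
  have hAB : (A \ B).Nonempty := by
    rw [Finset.sdiff_nonempty]
    intro hsub
    exact hne (Finset.eq_of_subset_of_card_le hsub (le_of_eq hcard.symm))
  have hBA : (B \ A).Nonempty := by
    rw [Finset.sdiff_nonempty]
    intro hsub
    exact hne (Finset.eq_of_subset_of_card_le hsub (le_of_eq hcard)).symm
  set y := (A \ B).max' hAB with hy
  set x := (B \ A).max' hBA with hx
  have hyA : y ∈ A \ B := Finset.max'_mem _ hAB
  have hxB : x ∈ B \ A := Finset.max'_mem _ hBA
  refine ⟨x, hxB, y, hyA, ?_⟩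
  by_contra hlt
  push_neg at hlt  -- x ≤ y
  have hxy : x ≠ y := by
    intro hxy
    rw [hxy] at hxB
    exact (Finset.mem_sdiff.1 hxB).2 (Finset.mem_sdiff.1 hyA).1
  have hxy' : x < y := lt_of_le_of_ne hlt hxy
  -- B.filter (y ≤ ·) ⊆ (A.filter (y ≤ ·)).erase y
  have hsub : B.filter (y ≤ ·) ⊆ (A.filter (y ≤ ·)).erase y := by
    intro b hb
    rw [Finset.mem_filter] at hb
    have hbne : b ≠ y := by
      intro hby
      exact (Finset.mem_sdiff.1 hyA).2 (hby ▸ hb.1)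
    have hbA : b ∈ A := by
      by_contra hbA
      have hmem : b ∈ B \ A := Finset.mem_sdiff.2 ⟨hb.1, hbA⟩
      have hbx : b ≤ x := Finset.le_max' _ b hmem
      have hyb : y < b := lt_of_le_of_ne hb.2 (Ne.symm hbne)
      exact absurd hbx (not_le.2 (lt_trans hxy' hyb))
    exact Finset.mem_erase.2 ⟨hbne, Finset.mem_filter.2 ⟨hbA, hb.2⟩⟩
  have hymem : y ∈ A.filter (y ≤ ·) := Finset.mem_filter.2 ⟨(Finset.mem_sdiff.1 hyA).1, le_refl y⟩
  have h1 : (B.filter (y ≤ ·)).card ≤ ((A.filter (y ≤ ·)).erase y).card := Finset.card_le_card hsub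
  have h2 : ((A.filter (y ≤ ·)).erase y).card < (A.filter (y ≤ ·)).card :=
    Finset.card_erase_lt_of_mem hymem
  have h3 := h.card_filter_ge_le y
  omega

lemma sorted_filter_eq_take {l : List α} (hs : l.Pairwise (· ≤ ·)) (t : α) :
    l.filter (fun x => decide (x < t)) = l.take (l.countP (fun x => decide (x < t))) := by
  induction l with
  | nil => simp
  | cons a l ih =>
    rw [List.pairwise_cons] at hs
    by_cases ha : a < t
    · rw [List.filter_cons, List.countP_cons, decide_eq_true ha]
      simp only [if_true]
      rw [ih hs.2]
      simp [List.take_succ_cons]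
    · have hall : ∀ x ∈ l, ¬ (x < t) := fun x hx hxt =>
        ha (lt_of_le_of_lt (hs.1 x hx) hxt)
      have h0 : l.countP (fun x => decide (x < t)) = 0 := by
        rw [List.countP_eq_zero]
        intro x hx
        simpa using hall x hx
      have hf : l.filter (fun x => decide (x < t)) = [] := by
        rw [List.filter_eq_nil_iff]
        intro x hx
        simpa using hall x hx
      simp [List.filter_cons, List.countP_cons, ha, h0, hf]

lemma sort_filter_eq {A : Finset α} (p : α → Prop) [DecidablePred p] :
    (A.filter p).sort (· ≤ ·) = (A.sort (· ≤ ·)).filter (fun x => decide (p x)) := by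
  apply List.Perm.eq_of_pairwise' (Finset.pairwise_sort _ _)
  · exact (Finset.pairwise_sort _ _).filter _
  · rw [← Multiset.coe_eq_coe, Finset.sort_eq, Finset.filter_val,
      ← Finset.sort_eq A (· ≤ ·), Multiset.filter_coe]

lemma LEsort.filter_lt {A B : Finset α} (h : LEsort A B) (t : α)
    (hc : (A.filter (· < t)).card = (B.filter (· < t)).card) :
    LEsort (A.filter (· < t)) (B.filter (· < t)) := by
  unfold LEsort
  rw [sort_filter_eq, sort_filter_eq]
  rw [sorted_filter_eq_take (Finset.pairwise_sort _ _),
      sorted_filter_eq_take (Finset.pairwise_sort _ _)]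
  have hcc : (A.sort (· ≤ ·)).countP (fun x => decide (x < t))
      = (B.sort (· ≤ ·)).countP (fun x => decide (x < t)) := by
    rw [← card_filter_eq_countP_s8, ← card_filter_eq_countP_s8]; exact hc
  rw [← hcc]
  exact List.forall₂_take _ h

end General

section FinLemmas
variable {n : ℕ} [NeZero n]

lemma cpos_eq (i x : Fin n) :
    cpos i x = if i.val ≤ x.val then x.val - i.val else x.val + n - i.val := by
  have hx := x.isLt
  have hi := i.isLt
  show ((x - i : Fin n) : ℕ) = _
  rw [Fin.sub_def]
  show (n - i.val + x.val) % n = _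
  split
  · have h : n - i.val + x.val = n + (x.val - i.val) := by omega
    rw [h, Nat.add_mod_left, Nat.mod_eq_of_lt (by omega)]
  · rw [Nat.mod_eq_of_lt (by omega)]
    omega

lemma cpos_lt (i x : Fin n) : cpos i x < n := (x - i).isLt

lemma mem_cycIco {i j x : Fin n} : x ∈ cycIco i j ↔ cpos i x < cpos i j := by
  simp [cycIco]

lemma cycIco_compl {i j : Fin n} (hij : i ≠ j) (x : Fin n) :
    cpos i x < cpos i j ↔ ¬ (cpos j x < cpos j i) := by
  have hne : i.val ≠ j.val := fun h => hij (Fin.ext h)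
  have hx := x.isLt; have hi := i.isLt; have hj := j.isLt
  rw [cpos_eq, cpos_eq, cpos_eq, cpos_eq]
  split_ifs <;> omega

lemma cpos_of_mem {i j x : Fin n} (h : cpos j x < cpos j i) :
    cpos i x = cpos j x + cpos i j := by
  have hx := x.isLt; have hi := i.isLt; have hj := j.isLt
  rw [cpos_eq, cpos_eq] at h
  rw [cpos_eq, cpos_eq, cpos_eq]
  split_ifs at h ⊢ <;> omega

lemma cpos_base (i b x : Fin n) :
    cpos b x = if cpos i b ≤ cpos i x then cpos i x - cpos i b
               else cpos i x + n - cpos i b := by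
  have hx := x.isLt; have hi := i.isLt; have hb := b.isLt
  rw [cpos_eq, cpos_eq, cpos_eq]
  split_ifs <;> omega

lemma cyclicallyOrdered_of {i a b c d : Fin n}
    (h1 : cpos i a < cpos i b) (h2 : cpos i b < cpos i c) (h3 : cpos i c < cpos i d) :
    CyclicallyOrdered b c d a := by
  have ha := cpos_lt i a; have hbn := cpos_lt i b
  have hc := cpos_lt i c; have hd := cpos_lt i d
  have e1 := cpos_base i b c
  have e2 := cpos_base i b d
  have e3 := cpos_base i b a
  refine ⟨?_, ?_, ?_⟩
  · rw [e1]; split_ifs <;> omega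
  · rw [e1, e2]; split_ifs <;> omega
  · rw [e2, e3]; split_ifs <;> omega

lemma mem_image_shift {S : Finset (Fin n)} {i u : Fin n} :
    u ∈ S.image (fun x => x - i) ↔ u + i ∈ S := by
  constructor
  · rintro h
    obtain ⟨x, hx, he⟩ := Finset.mem_image.1 h
    have hx' : x = u + i := by rw [← he, sub_add_cancel x i]
    rwa [← hx']
  · intro h
    exact Finset.mem_image.2 ⟨u + i, h, add_sub_cancel_right u i⟩

lemma shift_injective (i : Fin n) : Function.Injective (fun x : Fin n => x - i) := by
  intro x y h
  have h2 := congrArg (· + i) h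
  simpa only [sub_add_cancel] using h2

lemma image_filter_lt (S : Finset (Fin n)) (i j : Fin n) :
    (S.image (fun x => x - i)).filter (· < (j - i)) =
      (S ∩ cycIco i j).image (fun x => x - i) := by
  rw [Finset.filter_image]
  congr 1
  ext x
  simp only [Finset.mem_filter, Finset.mem_inter, mem_cycIco]
  exact and_congr_right fun _ => Iff.rfl

end FinLemmas

/-- If I_i = I_j and J ∈ M_I is weakly separated from I_i, then J agrees with
I_i on [i,j) or on [j,i). -/
theorem stmt_8 {n k : ℕ} [NeZero n] (I : Fin n → Finset (Fin n))
    (hI : IsGrassmannNecklace k I) (i j : Fin n) (hij : i ≠ j) (heq : I i = I j)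
    (J : Finset (Fin n)) (hJk : J.card = k) (hJ : MemPositroid I J)
    (hws : WeaklySeparated J (I i)) :
    J ∩ cycIco i j = I i ∩ cycIco i j ∨ J ∩ cycIco j i = I i ∩ cycIco j i := by
  have hfinj := shift_injective (n := n) i
  have hginj := shift_injective (n := n) j
  have hLi : LEsort ((I i).image (fun x => x - i)) (J.image (fun x => x - i)) := hJ i
  have hLj : LEsort ((I i).image (fun x => x - j)) (J.image (fun x => x - j)) := by
    rw [heq]; exact hJ j
  have hcardIm : ∀ (S : Finset (Fin n)) (m : Fin n),
      ((S ∩ cycIco i j).image (fun x => x - i)).card = (S ∩ cycIco i j).card :=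
    fun S m => Finset.card_image_of_injective _ hfinj
  have hc1 : (J ∩ cycIco i j).card ≤ (I i ∩ cycIco i j).card := by
    have h := hLi.card_filter_lt_le (j - i)
    rwa [image_filter_lt, image_filter_lt, Finset.card_image_of_injective _ hfinj,
      Finset.card_image_of_injective _ hfinj] at h
  have hc2 : (J ∩ cycIco j i).card ≤ (I i ∩ cycIco j i).card := by
    have h := hLj.card_filter_lt_le (i - j)
    rwa [image_filter_lt, image_filter_lt, Finset.card_image_of_injective _ hginj,
      Finset.card_image_of_injective _ hginj] at h
  have hpart : ∀ S : Finset (Fin n),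
      (S ∩ cycIco i j).card + (S ∩ cycIco j i).card = S.card := by
    intro S
    have h1 : S ∩ cycIco i j = S.filter (fun x => cpos i x < cpos i j) := by
      ext x; simp [mem_cycIco, Finset.mem_filter, Finset.mem_inter]
    have h2 : S ∩ cycIco j i = S.filter (fun x => ¬ (cpos i x < cpos i j)) := by
      ext x
      simp only [Finset.mem_inter, Finset.mem_filter, mem_cycIco]
      exact and_congr_right fun _ => by rw [cycIco_compl hij x, not_not]
    rw [h1, h2, Finset.card_filter_add_card_filter_not]
  have hIcard := hI.1 i
  have hpJ := hpart J
  have hpI := hpart (I i)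
  have he1 : (I i ∩ cycIco i j).card = (J ∩ cycIco i j).card := by omega
  have he2 : (I i ∩ cycIco j i).card = (J ∩ cycIco j i).card := by omega
  by_contra hcon
  push_neg at hcon
  obtain ⟨hne1, hne2⟩ := hcon
  -- i-side witnesses
  have hL1 : LEsort ((I i ∩ cycIco i j).image (fun x => x - i))
      ((J ∩ cycIco i j).image (fun x => x - i)) := by
    rw [← image_filter_lt, ← image_filter_lt]
    refine hLi.filter_lt (j - i) ?_
    rw [image_filter_lt, image_filter_lt, Finset.card_image_of_injective _ hfinj,
      Finset.card_image_of_injective _ hfinj]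
    exact he1
  have hne1' : (I i ∩ cycIco i j).image (fun x => x - i)
      ≠ (J ∩ cycIco i j).image (fun x => x - i) := by
    intro h
    exact hne1.symm (Finset.image_injective hfinj h)
  obtain ⟨x₁, hx₁, y₁, hy₁, hyx₁⟩ := exists_lt_of_LEsort_ne hL1 hne1'
  rw [Finset.mem_sdiff] at hx₁ hy₁
  have ha₁ : x₁ + i ∈ J ∩ cycIco i j := mem_image_shift.1 hx₁.1
  have ha₁' : x₁ + i ∉ I i ∩ cycIco i j := fun h => hx₁.2 (mem_image_shift.2 h)
  have hb₁ : y₁ + i ∈ I i ∩ cycIco i j := mem_image_shift.1 hy₁.1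
  have hb₁' : y₁ + i ∉ J ∩ cycIco i j := fun h => hy₁.2 (mem_image_shift.2 h)
  -- j-side witnesses
  have hL2 : LEsort ((I i ∩ cycIco j i).image (fun x => x - j))
      ((J ∩ cycIco j i).image (fun x => x - j)) := by
    rw [← image_filter_lt, ← image_filter_lt]
    refine hLj.filter_lt (i - j) ?_
    rw [image_filter_lt, image_filter_lt, Finset.card_image_of_injective _ hginj,
      Finset.card_image_of_injective _ hginj]
    exact he2
  have hne2' : (I i ∩ cycIco j i).image (fun x => x - j)
      ≠ (J ∩ cycIco j i).image (fun x => x - j) := by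
    intro h
    exact hne2.symm (Finset.image_injective hginj h)
  obtain ⟨x₂, hx₂, y₂, hy₂, hyx₂⟩ := exists_lt_of_LEsort_ne hL2 hne2'
  rw [Finset.mem_sdiff] at hx₂ hy₂
  have ha₂ : x₂ + j ∈ J ∩ cycIco j i := mem_image_shift.1 hx₂.1
  have ha₂' : x₂ + j ∉ I i ∩ cycIco j i := fun h => hx₂.2 (mem_image_shift.2 h)
  have hb₂ : y₂ + j ∈ I i ∩ cycIco j i := mem_image_shift.1 hy₂.1
  have hb₂' : y₂ + j ∉ J ∩ cycIco j i := fun h => hy₂.2 (mem_image_shift.2 h)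
  set a₁ := x₁ + i
  set b₁ := y₁ + i
  set a₂ := x₂ + j
  set b₂ := y₂ + j
  -- memberships
  have ha₁J : a₁ ∈ J := (Finset.mem_inter.1 ha₁).1
  have ha₁c : a₁ ∈ cycIco i j := (Finset.mem_inter.1 ha₁).2
  have ha₁I : a₁ ∉ I i := fun h => ha₁' (Finset.mem_inter.2 ⟨h, ha₁c⟩)
  have hb₁I : b₁ ∈ I i := (Finset.mem_inter.1 hb₁).1
  have hb₁c : b₁ ∈ cycIco i j := (Finset.mem_inter.1 hb₁).2
  have hb₁J : b₁ ∉ J := fun h => hb₁' (Finset.mem_inter.2 ⟨h, hb₁c⟩)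
  have ha₂J : a₂ ∈ J := (Finset.mem_inter.1 ha₂).1
  have ha₂c : a₂ ∈ cycIco j i := (Finset.mem_inter.1 ha₂).2
  have ha₂I : a₂ ∉ I i := fun h => ha₂' (Finset.mem_inter.2 ⟨h, ha₂c⟩)
  have hb₂I : b₂ ∈ I i := (Finset.mem_inter.1 hb₂).1
  have hb₂c : b₂ ∈ cycIco j i := (Finset.mem_inter.1 hb₂).2
  have hb₂J : b₂ ∉ J := fun h => hb₂' (Finset.mem_inter.2 ⟨h, hb₂c⟩)
  -- positions
  have hpb₁a₁ : cpos i b₁ < cpos i a₁ := by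
    show ((b₁ - i : Fin n) : ℕ) < ((a₁ - i : Fin n) : ℕ)
    rw [show b₁ - i = y₁ from add_sub_cancel_right y₁ i,
        show a₁ - i = x₁ from add_sub_cancel_right x₁ i]
    exact hyx₁
  have hpb₂a₂ : cpos j b₂ < cpos j a₂ := by
    show ((b₂ - j : Fin n) : ℕ) < ((a₂ - j : Fin n) : ℕ)
    rw [show b₂ - j = y₂ from add_sub_cancel_right y₂ j,
        show a₂ - j = x₂ from add_sub_cancel_right x₂ j]
    exact hyx₂
  have ha₁lt : cpos i a₁ < cpos i j := mem_cycIco.1 ha₁c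
  have hb₂mem : cpos j b₂ < cpos j i := mem_cycIco.1 hb₂c
  have ha₂mem : cpos j a₂ < cpos j i := mem_cycIco.1 ha₂c
  have hb₂pos : cpos i b₂ = cpos j b₂ + cpos i j := cpos_of_mem hb₂mem
  have ha₂pos : cpos i a₂ = cpos j a₂ + cpos i j := cpos_of_mem ha₂mem
  have h1 : cpos i b₁ < cpos i a₁ := hpb₁a₁
  have h2 : cpos i a₁ < cpos i b₂ := by omega
  have h3 : cpos i b₂ < cpos i a₂ := by omega
  have hco : CyclicallyOrdered a₁ b₂ a₂ b₁ := cyclicallyOrdered_of h1 h2 h3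
  exact hws ⟨a₁, b₂, a₂, b₁, hco,
    Finset.mem_sdiff.2 ⟨ha₁J, ha₁I⟩, Finset.mem_sdiff.2 ⟨ha₂J, ha₂I⟩,
    Finset.mem_sdiff.2 ⟨hb₂I, hb₂J⟩, Finset.mem_sdiff.2 ⟨hb₁I, hb₁J⟩⟩
end

section
/- Let C be a weakly separated collection in binom([n],k), E ∈ binom([n],k−1), and x ≠ y ∈ [n] with Ex, Ey ∈ C. Let a ∈ (x,y)∖E and suppose J ∈ C satisfies J ∥ Ex, J ∥ Ey, but J is not weakly separated from Ea. Then there exist ℓ, r ∈ J∖E with x ≤_x ℓ <_x r ≤_x y, a ∈ (ℓ,r), (ℓ,r) ∩ (J∖E) = ∅, and (r,ℓ) ∩ (E∖J) ≠ ∅. -/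
lemma cpos_val {n : ℕ} (b v : Fin n) :
    cpos b v = if b.val ≤ v.val then v.val - b.val else v.val + n - b.val := by
  have hb := b.isLt; have hv := v.isLt
  show ((v - b : Fin n) : ℕ) = _
  rw [Fin.sub_def]
  simp only [Fin.val_mk]
  split_ifs with h
  · rw [show n - b.val + v.val = n + (v.val - b.val) by omega, Nat.add_mod_left,
      Nat.mod_eq_of_lt (by omega)]
  · rw [Nat.mod_eq_of_lt (by omega)]; omega

lemma cpos_lt_n {n : ℕ} (b v : Fin n) : cpos b v < n := (v - b).isLt

lemma cpos_self {n : ℕ} (b : Fin n) : cpos b b = 0 := by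
  rw [cpos_val]; simp

lemma cpos_inj {n : ℕ} {b u v : Fin n} (h : cpos b u = cpos b v) : u = v := by
  have hb := b.isLt; have hu := u.isLt; have hv := v.isLt
  rw [cpos_val, cpos_val] at h
  apply Fin.ext
  split_ifs at h <;> omega

lemma cpos_pos {n : ℕ} {b u : Fin n} (h : u ≠ b) : 0 < cpos b u := by
  rcases Nat.eq_zero_or_pos (cpos b u) with h0 | h0
  · exact absurd (cpos_inj (h0.trans (cpos_self b).symm)) h
  · exact h0

lemma cpos_sub_of_le {n : ℕ} {b w v : Fin n} (h : cpos b w ≤ cpos b v) :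
    cpos w v = cpos b v - cpos b w := by
  have hb := b.isLt; have hu := w.isLt; have hv := v.isLt
  rw [cpos_val, cpos_val] at h ⊢
  rw [cpos_val]
  split_ifs at h ⊢ <;> omega

lemma cpos_sub_of_lt {n : ℕ} {b w v : Fin n} (h : cpos b v < cpos b w) :
    cpos w v = cpos b v + n - cpos b w := by
  have hb := b.isLt; have hu := w.isLt; have hv := v.isLt
  rw [cpos_val, cpos_val] at h ⊢
  rw [cpos_val]
  split_ifs at h ⊢ <;> omega

lemma cyc_of_base {n : ℕ} {b0 w x y z : Fin n} (h1 : cpos b0 w < cpos b0 x)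
    (h2 : cpos b0 x < cpos b0 y) (h3 : cpos b0 y < cpos b0 z) :
    CyclicallyOrdered w x y z := by
  have e1 := cpos_sub_of_le (le_of_lt h1)
  have e2 := cpos_sub_of_le (le_of_lt (h1.trans h2))
  have e3 := cpos_sub_of_le (le_of_lt ((h1.trans h2).trans h3))
  exact ⟨by omega, by omega, by omega⟩

lemma cyc_rot {n : ℕ} {w x y z : Fin n} (h : CyclicallyOrdered w x y z) :
    CyclicallyOrdered x y z w := by
  obtain ⟨h1, h2, h3⟩ := h
  have e1 := cpos_sub_of_le (le_of_lt h2)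
  have e2 := cpos_sub_of_le (le_of_lt (h2.trans h3))
  have e3 : cpos x w = cpos w w + n - cpos w x := cpos_sub_of_lt (by rw [cpos_self]; exact h1)
  have := cpos_lt_n w z
  rw [cpos_self] at e3
  exact ⟨by omega, by omega, by omega⟩

/-- Description of a witness: if J ∈ C is weakly separated from Ex and Ey but
not from Ea (a ∈ (x,y)∖E), then there are ℓ, r ∈ J∖E with x ≤_x ℓ <_x r ≤_x y,
a ∈ (ℓ,r), (ℓ,r) ∩ (J∖E) = ∅ and (r,ℓ) ∩ (E∖J) ≠ ∅. -/
theorem stmt_12 {n k : ℕ} (hk : 1 ≤ k) (C : Finset (Finset (Fin n)))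
    (hCk : ∀ X ∈ C, X.card = k) (hC : IsWSCollection C)
    (E : Finset (Fin n)) (hE : E.card = k - 1)
    (x y : Fin n) (hxy : x ≠ y) (hxE : x ∉ E) (hyE : y ∉ E)
    (hEx : insert x E ∈ C) (hEy : insert y E ∈ C)
    (a : Fin n) (ha : a ∈ cycOpen x y) (haE : a ∉ E)
    (J : Finset (Fin n)) (hJ : J ∈ C)
    (h1 : WeaklySeparated J (insert x E)) (h2 : WeaklySeparated J (insert y E))
    (h3 : ¬ WeaklySeparated J (insert a E)) :
    ∃ l r : Fin n, l ∈ J \ E ∧ r ∈ J \ E ∧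
      cpos x l < cpos x r ∧ cpos x r ≤ cpos x y ∧
      a ∈ cycOpen l r ∧ (∀ z ∈ cycOpen l r, z ∉ J \ E) ∧
      ∃ z ∈ cycOpen r l, z ∈ E \ J := by
  simp only [cycOpen, Finset.mem_filter, Finset.mem_univ, true_and] at ha
  obtain ⟨hax1, hax2⟩ := ha
  have hβn : cpos x y < n := cpos_lt_n x y
  have hane : a ≠ x := by intro h; rw [h, cpos_self] at hax1; omega
  have hay : a ≠ y := by intro h; rw [h] at hax2; omega
  have hay' : cpos a y = cpos x y - cpos x a := cpos_sub_of_le (le_of_lt hax2)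
  have hax' : cpos a x = n - cpos x a := by
    have h' : cpos x x < cpos x a := by rw [cpos_self]; exact hax1
    have := cpos_sub_of_lt h'
    rw [cpos_self] at this; omega
  -- helper to exploit weak separation from insert u E
  have app : ∀ u : Fin n, u ∉ E → WeaklySeparated J (insert u E) →
      ∀ p q p' q' : Fin n, CyclicallyOrdered p q p' q' →
      p ∈ J → p ∉ E → p ≠ u → p' ∈ J → p' ∉ E → p' ≠ u →
      (q = u ∨ q ∈ E) → q ∉ J → (q' = u ∨ q' ∈ E) → q' ∉ J → False := by
    intro u huE hws p q p' q' hc hp hpE hpu hp' hp'E hp'u hq hqJ hq' hq'J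
    exact hws ⟨p, q, p', q', hc,
      Finset.mem_sdiff.mpr ⟨hp, by simp only [Finset.mem_insert, not_or]; exact ⟨hpu, hpE⟩⟩,
      Finset.mem_sdiff.mpr ⟨hp', by simp only [Finset.mem_insert, not_or]; exact ⟨hp'u, hp'E⟩⟩,
      Finset.mem_sdiff.mpr ⟨by simp only [Finset.mem_insert]; exact hq, hqJ⟩,
      Finset.mem_sdiff.mpr ⟨by simp only [Finset.mem_insert]; exact hq', hq'J⟩⟩
  -- extract witness of non weak separation from Ea
  obtain ⟨w1, v1, w2, v2, hcyc, hw1, hw2, hv1, hv2⟩ := not_not.mp h3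
  rw [Finset.mem_sdiff] at hw1 hw2 hv1 hv2
  rw [Finset.mem_insert] at hw1 hw2 hv1 hv2
  push_neg at hw1 hw2
  -- hw1 : w1 ∈ J ∧ w1 ≠ a ∧ w1 ∉ E ; hv1 : (v1 = a ∨ v1 ∈ E) ∧ v1 ∉ J
  have key : a ∉ J ∧ ∃ P P' Q : Fin n, P ∈ J ∧ P ∉ E ∧ P' ∈ J ∧ P' ∉ E ∧ Q ∈ E ∧ Q ∉ J ∧
      cpos a P' < cpos a Q ∧ cpos a Q < cpos a P := by
    have hv1v2 : v1 ≠ v2 := by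
      intro he
      have h12 := hcyc.2.1; have h23 := hcyc.2.2
      rw [he] at h12; omega
    by_cases hva : v1 = a ∨ v2 = a
    · have haJ : a ∉ J := by
        rcases hva with h | h
        · rw [← h]; exact hv1.2
        · rw [← h]; exact hv2.2
      refine ⟨haJ, ?_⟩
      rcases hva with h | h
      · have hc := cyc_rot hcyc
        rw [h] at hc
        obtain ⟨c1', c2', c3'⟩ := hc
        have hv2E : v2 ∈ E := hv2.1.resolve_left (by rw [← h]; exact hv1v2.symm)
        exact ⟨w1, w2, v2, hw1.1, hw1.2.2, hw2.1, hw2.2.2, hv2E, hv2.2, c2', c3'⟩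
      · have hc := cyc_rot (cyc_rot (cyc_rot hcyc))
        rw [h] at hc
        obtain ⟨c1', c2', c3'⟩ := hc
        have hv1E : v1 ∈ E := hv1.1.resolve_left (by rw [← h]; exact hv1v2)
        exact ⟨w2, w1, v1, hw2.1, hw2.2.2, hw1.1, hw1.2.2, hv1E, hv1.2, c2', c3'⟩
    · push_neg at hva
      have hv1E : v1 ∈ E := hv1.1.resolve_left hva.1
      have hv2E : v2 ∈ E := hv2.1.resolve_left hva.2
      have hx12 : w1 = x ∨ w2 = x := by
        by_contra hne; push_neg at hne
        exact app x hxE h1 w1 v1 w2 v2 hcyc hw1.1 hw1.2.2 hne.1 hw2.1 hw2.2.2 hne.2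
          (Or.inr hv1E) hv1.2 (Or.inr hv2E) hv2.2
      have hy12 : w1 = y ∨ w2 = y := by
        by_contra hne; push_neg at hne
        exact app y hyE h2 w1 v1 w2 v2 hcyc hw1.1 hw1.2.2 hne.1 hw2.1 hw2.2.2 hne.2
          (Or.inr hv1E) hv1.2 (Or.inr hv2E) hv2.2
      obtain ⟨c1, c2, hc1E, hc1J, hc2E, hc2J, hb1, hb2, hb3, hxJ, hyJ⟩ :
          ∃ c1 c2 : Fin n, c1 ∈ E ∧ c1 ∉ J ∧ c2 ∈ E ∧ c2 ∉ J ∧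
            0 < cpos x c1 ∧ cpos x c1 < cpos x y ∧ cpos x y < cpos x c2 ∧ x ∈ J ∧ y ∈ J := by
        rcases hx12 with hx' | hx' <;> rcases hy12 with hy' | hy'
        · exact absurd (hx'.symm.trans hy') hxy
        · subst hx'; subst hy'
          exact ⟨v1, v2, hv1E, hv1.2, hv2E, hv2.2, hcyc.1, hcyc.2.1, hcyc.2.2, hw1.1, hw2.1⟩
        · have hc := cyc_rot (cyc_rot hcyc)
          subst hx'; subst hy'
          exact ⟨v2, v1, hv2E, hv2.2, hv1E, hv1.2, hc.1, hc.2.1, hc.2.2, hw2.1, hw1.1⟩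
        · exact absurd (hx'.symm.trans hy') hxy
      by_cases haJ : a ∈ J
      · exfalso
        have hc1a : c1 ≠ a := fun he => haE (he ▸ hc1E)
        have hnec : cpos x c1 ≠ cpos x a := fun he => hc1a (cpos_inj he)
        rcases lt_or_gt_of_ne hnec with hlt | hgt
        · -- c1 before a : contradict h2 via (x, c1, a, c2)
          have hcn := cpos_lt_n x c2
          have e1 : cpos y c2 = cpos x c2 - cpos x y := cpos_sub_of_le (le_of_lt hb3)
          have e2 : cpos y x = n - cpos x y := by
            have h' : cpos x x < cpos x y := by rw [cpos_self]; omega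
            have := cpos_sub_of_lt h'
            rw [cpos_self] at this; omega
          have e3 : cpos y c1 = cpos x c1 + n - cpos x y := cpos_sub_of_lt hb2
          have e4 : cpos y a = cpos x a + n - cpos x y := cpos_sub_of_lt hax2
          have hcord : CyclicallyOrdered x c1 a c2 :=
            cyc_rot (cyc_of_base (show cpos y c2 < cpos y x by omega)
              (show cpos y x < cpos y c1 by omega) (show cpos y c1 < cpos y a by omega))
          exact app y hyE h2 x c1 a c2 hcord hxJ hxE hxy haJ haE hay
            (Or.inr hc1E) hc1J (Or.inr hc2E) hc2J
        · -- a before c1 : contradict h1 via (a, c1, y, c2)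
          have hcord : CyclicallyOrdered a c1 y c2 := cyc_of_base hgt hb2 hb3
          exact app x hxE h1 a c1 y c2 hcord haJ haE hane hyJ hyE hxy.symm
            (Or.inr hc1E) hc1J (Or.inr hc2E) hc2J
      · refine ⟨haJ, x, y, c2, hxJ, hxE, hyJ, hyE, hc2E, hc2J, ?_, ?_⟩
        · have e1 : cpos a c2 = cpos x c2 - cpos x a := cpos_sub_of_le (by omega)
          omega
        · have e1 : cpos a c2 = cpos x c2 - cpos x a := cpos_sub_of_le (by omega)
          have := cpos_lt_n x c2
          omega
  obtain ⟨haJ, P, P', Q, hPJ, hPE, hP'J, hP'E, hQE, hQJ, hk1, hk2⟩ := key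
  have hPS : P ∈ J \ E := Finset.mem_sdiff.mpr ⟨hPJ, hPE⟩
  have hP'S : P' ∈ J \ E := Finset.mem_sdiff.mpr ⟨hP'J, hP'E⟩
  have hSne : (J \ E).Nonempty := ⟨P, hPS⟩
  obtain ⟨l, hlS, hlmax⟩ := Finset.exists_max_image (J \ E) (cpos a) hSne
  obtain ⟨r, hrS, hrmin⟩ := Finset.exists_min_image (J \ E) (cpos a) hSne
  have hSpos : ∀ z ∈ J \ E, 0 < cpos a z := fun z hz =>
    cpos_pos (fun he => haJ (he ▸ (Finset.mem_sdiff.mp hz).1))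
  have hrP' : cpos a r ≤ cpos a P' := hrmin P' hP'S
  have hlP : cpos a P ≤ cpos a l := hlmax P hPS
  have claimR : cpos a r ≤ cpos x y - cpos x a := by
    by_contra hcon
    push_neg at hcon
    rw [← hay'] at hcon
    have hyJ' : y ∉ J := by
      intro hyJ
      have := hrmin y (Finset.mem_sdiff.mpr ⟨hyJ, hyE⟩); omega
    have hcord : CyclicallyOrdered P' Q P y :=
      cyc_rot (cyc_of_base (show cpos a y < cpos a P' by omega) hk1 hk2)
    exact app y hyE h2 P' Q P y hcord hP'J hP'E (fun he => hyJ' (he ▸ hP'J)) hPJ hPE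
      (fun he => hyJ' (he ▸ hPJ)) (Or.inr hQE) hQJ (Or.inl rfl) hyJ'
  have claimL : n - cpos x a ≤ cpos a l := by
    by_contra hcon
    push_neg at hcon
    rw [← hax'] at hcon
    have hxJ' : x ∉ J := by
      intro hxJ
      have := hlmax x (Finset.mem_sdiff.mpr ⟨hxJ, hxE⟩); omega
    have hcord : CyclicallyOrdered P' Q P x :=
      cyc_of_base hk1 hk2 (show cpos a P < cpos a x by omega)
    exact app x hxE h1 P' Q P x hcord hP'J hP'E (fun he => hxJ' (he ▸ hP'J)) hPJ hPE
      (fun he => hxJ' (he ▸ hPJ)) (Or.inr hQE) hQJ (Or.inl rfl) hxJ'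
  have hlr : cpos a r < cpos a l := by omega
  have hln : cpos a l < n := cpos_lt_n a l
  have hrpos : 0 < cpos a r := hSpos r hrS
  have exl : cpos x l = cpos a l - (n - cpos x a) := by
    have h' : cpos a x ≤ cpos a l := by rw [hax']; exact claimL
    have := cpos_sub_of_le h'
    rw [hax'] at this; exact this
  have exr : cpos x r = cpos a r + cpos x a := by
    have h' : cpos a r < cpos a x := by rw [hax']; omega
    have := cpos_sub_of_lt h'
    rw [hax'] at this; omega
  have ela : cpos l a = n - cpos a l := by
    have h' : cpos a a < cpos a l := by rw [cpos_self]; exact hSpos l hlS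
    have := cpos_sub_of_lt h'
    rw [cpos_self] at this; omega
  have elr : cpos l r = cpos a r + n - cpos a l := cpos_sub_of_lt hlr
  refine ⟨l, r, hlS, hrS, by omega, by omega, ?_, ?_, ⟨Q, ?_, Finset.mem_sdiff.mpr ⟨hQE, hQJ⟩⟩⟩
  · simp only [cycOpen, Finset.mem_filter, Finset.mem_univ, true_and]
    omega
  · intro z hz hzS
    simp only [cycOpen, Finset.mem_filter, Finset.mem_univ, true_and] at hz
    have h1z : cpos a z ≤ cpos a l := hlmax z hzS
    have h2z : cpos a r ≤ cpos a z := hrmin z hzS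
    rcases eq_or_lt_of_le h1z with he | hlt
    · have hzl : z = l := cpos_inj he
      rw [hzl, cpos_self] at hz; omega
    · have ezz : cpos l z = cpos a z + n - cpos a l := cpos_sub_of_lt hlt
      omega
  · simp only [cycOpen, Finset.mem_filter, Finset.mem_univ, true_and]
    have e1 : cpos r Q = cpos a Q - cpos a r := cpos_sub_of_le (by omega)
    have e2 : cpos r l = cpos a l - cpos a r := cpos_sub_of_le (le_of_lt hlr)
    omega
end
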